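/- Let (A,∘,[·,·]) be a Gel'fand-Dorfman bialgebra over K of codimension 1 in a vector space E. Assume the Lie algebra (A,[·,·]) is perfect ([A,A] = A), every derivation of (A,[·,·]) is inner, and the center of (A,[·,·]) is trivial. Then Extd(E,A) is in bijection with SF5(A)/≈, where SF5(A) is the set of GD flag datums with p = q = η = 0, D = 0 and a1 = 0, written (S,T,k), and (S,T,k) ≈ (S',T',k') iff there exists β ∈ K* with S = βS', T = βT' and k = βk'. -/

import Mathlib

namespace GDExt

def IsNovikov {M : Type*} [AddCommGroup M] (mul : M → M → M) : Prop :=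
  (∀ a b c, mul (mul a b) c - mul a (mul b c) = mul (mul b a) c - mul b (mul a c)) ∧
  ∀ a b c, mul (mul a b) c = mul (mul a c) b

def IsLieBracket {M : Type*} [AddCommGroup M] (br : M → M → M) : Prop :=
  (∀ a, br a a = 0) ∧ ∀ a b c, br a (br b c) = br (br a b) c + br b (br a c)

def IsGD {M : Type*} [AddCommGroup M] (mul br : M → M → M) : Prop :=
  IsNovikov mul ∧ IsLieBracket br ∧
  ∀ a b c, br a (mul b c) - br c (mul b a) + mul (br b a) c - mul (br b c) a - mul b (br a c) = 0

variable {K : Type*} [Field K]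
variable {A V : Type*} [AddCommGroup A] [Module K A] [AddCommGroup V] [Module K V]

/-- First component bilinear product of the unified product `A ♮ V`. -/
def uniMul (circ : A →ₗ[K] A →ₗ[K] A) (lA rA : A →ₗ[K] Module.End K V)
    (lV rV : V →ₗ[K] Module.End K A) (f : V →ₗ[K] V →ₗ[K] A)
    (st : V →ₗ[K] V →ₗ[K] V) : A × V → A × V → A × V :=
  fun p q =>
    (circ p.1 q.1 + lV p.2 q.1 + rV q.2 p.1 + f p.2 q.2,
     st p.2 q.2 + lA p.1 q.2 + rA q.1 p.2)

/-- Bracket of the unified product `A ♮ V`. -/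
def uniBr (brk : A →ₗ[K] A →ₗ[K] A) (tl : V →ₗ[K] A →ₗ[K] V) (tr : V →ₗ[K] A →ₗ[K] A)
    (hm : V →ₗ[K] V →ₗ[K] A) (vbr : V →ₗ[K] V →ₗ[K] V) : A × V → A × V → A × V :=
  fun p q =>
    (brk p.1 q.1 + tr p.2 q.1 - tr q.2 p.1 + hm p.2 q.2,
     vbr p.2 q.2 + tl p.2 q.1 - tl q.2 p.1)

end GDExt

namespace GDExt

variable (K : Type*) [Field K]
variable (A : Type*) [AddCommGroup A] [Module K A]

/-- The data of a Gel'fand-Dorfman flag datum. -/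
structure FlagData where
  p : A →ₗ[K] K
  q : A →ₗ[K] K
  S : A →ₗ[K] A
  T : A →ₗ[K] A
  a1 : A
  k : K
  eta : A →ₗ[K] K
  D : A →ₗ[K] A

variable {K A}

/-- Conditions (FN1)-(FN10), (TD1)-(TD2) and (GF1)-(GF6) for a GD flag datum of the
GD bialgebra `(A, circ, brk)`. -/
def IsFlagDatum (circ brk : A →ₗ[K] A →ₗ[K] A) (d : FlagData K A) : Prop :=
  -- (FN1)
  (∀ a b : A, d.p (circ a b) = d.p (circ b a)) ∧
  (∀ a b : A, d.q (circ a b) = d.q a * d.q b) ∧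
  -- (FN2)
  (∀ a b : A, d.S (circ a b) = circ (d.S a) b + circ a (d.S b) + (d.q a - d.p a) • d.S b
      + d.q b • d.T a - circ (d.T a) b) ∧
  -- (FN3)
  (∀ a b : A, d.T (circ a b) - d.T (circ b a)
      = d.p b • d.T a - d.p a • d.T b + circ a (d.T b) - circ b (d.T a)) ∧
  -- (FN4)
  (∀ a : A, d.T (d.T a) = d.T (d.S a) - d.S (d.T a) + circ a d.a1
      + (d.q a - 2 * d.p a) • d.a1 + d.k • d.T a) ∧
  -- (FN5)
  (∀ a : A, d.p (d.S a) - d.p (d.T a) = d.q (d.T a) + d.k * (d.p a - d.q a)) ∧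
  -- (FN6)
  (∀ a b : A, circ (d.S a) b + d.q a • d.S b = circ (d.S b) a + d.q b • d.S a) ∧
  -- (FN7)
  (∀ a b : A, d.T (circ a b) = circ (d.T a) b + d.p a • d.S b) ∧
  -- (FN8)
  (∀ a b : A, d.p (circ a b) = d.p a * d.q b) ∧
  -- (FN9)
  (∀ a : A, d.T (d.S a) = circ d.a1 a + d.k • d.S a - d.q a • d.a1) ∧
  -- (FN10)
  (∀ a : A, d.p (d.S a) = 0) ∧
  -- (TD1)
  (∀ a b : A, d.eta (brk a b) = 0) ∧
  -- (TD2)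
  (∀ a b : A, d.D (brk a b) = brk (d.D a) b + brk a (d.D b) + d.eta a • d.D b - d.eta b • d.D a) ∧
  -- (GF1)
  (∀ a b : A, brk a (d.T b) - d.p b • d.D a - d.D (circ b a) + d.T (brk b a)
      + circ (d.D b) a + d.eta b • d.S a + circ b (d.D a) + d.eta a • d.T b = 0) ∧
  -- (GF2)
  (∀ a b : A, d.p (brk b a) + d.eta b * d.q a - d.eta (circ b a) = 0) ∧
  -- (GF3)
  (∀ a b : A, brk a (d.S b) - d.q b • d.D a - brk b (d.S a) + d.q a • d.D b
      + circ (d.D a) b + d.eta a • d.S b - circ (d.D b) a - d.eta b • d.S a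
      - d.S (brk a b) = 0) ∧
  -- (GF4)
  (∀ a b : A, d.q (brk a b) = 0) ∧
  -- (GF5)
  (∀ a : A, brk a d.a1 - d.k • d.D a - d.D (d.S a) + d.T (d.D a)
      + (2 * d.eta a) • d.a1 + d.S (d.D a) = 0) ∧
  -- (GF6)
  (∀ a : A, d.k * d.eta a - d.eta (d.S a) + d.p (d.D a) + d.q (d.D a) = 0)

end GDExt

namespace GDExt

variable {K E : Type*} [Field K] [AddCommGroup E] [Module K E]

/-- The GD bialgebra structures on `E` containing the GD bialgebra `(A, circ, brk)`
as a subalgebra (i.e. restricting to the given operations on `A`). -/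
def GDStrOn (A : Submodule K E) (circ brk : ↥A →ₗ[K] ↥A →ₗ[K] ↥A) : Type _ :=
  {s : (E →ₗ[K] E →ₗ[K] E) × (E →ₗ[K] E →ₗ[K] E) //
    IsGD (fun u v => s.1 u v) (fun u v => s.2 u v) ∧
    ∀ a b : ↥A, s.1 a b = ((circ a b : ↥A) : E) ∧ s.2 a b = ((brk a b : ↥A) : E)}

/-- Equivalence of GD bialgebra structures on `E` containing `A` as a subalgebra:
there is a GD bialgebra isomorphism whose restriction to `A` is the identity. -/
def GDStrEquiv (A : Submodule K E) (circ brk : ↥A →ₗ[K] ↥A →ₗ[K] ↥A)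
    (s s' : GDStrOn A circ brk) : Prop :=
  ∃ φ : E ≃ₗ[K] E,
    (∀ u v : E, φ (s.1.1 u v) = s'.1.1 (φ u) (φ v)) ∧
    (∀ u v : E, φ (s.1.2 u v) = s'.1.2 (φ u) (φ v)) ∧
    (∀ a : ↥A, φ (a : E) = (a : E))

end GDExt


namespace GDExt

section Aux
variable {K E : Type*} [Field K] [AddCommGroup E] [Module K E]
variable (A : Submodule K E) (x : E)

noncomputable def Pc (hc : IsCompl A (K ∙ x)) : E →ₗ[K] A :=
  A.linearProjOfIsCompl _ hc

noncomputable def Lc (hx0 : x ≠ 0) (hc : IsCompl A (K ∙ x)) : E →ₗ[K] K :=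
  ((LinearEquiv.toSpanNonzeroSingleton K E x hx0).symm :
      (K ∙ x) →ₗ[K] K) ∘ₗ ((K ∙ x).linearProjOfIsCompl A hc.symm)

variable (hx0 : x ≠ 0) (hc : IsCompl A (K ∙ x))

@[simp] lemma Pc_coe (a : A) : Pc A x hc (a : E) = a :=
  Submodule.linearProjOfIsCompl_apply_left hc a

@[simp] lemma Pc_x : Pc A x hc x = 0 :=
  Submodule.projectionOnto_apply_of_mem_right hc (Submodule.mem_span_singleton_self x)

@[simp] lemma Lc_coe (a : A) : Lc A x hx0 hc (a : E) = 0 := by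
  simp only [Lc, LinearMap.coe_comp, Function.comp_apply]
  rw [show (K ∙ x).linearProjOfIsCompl A hc.symm (a : E) = 0 from
    Submodule.projectionOnto_apply_of_mem_right hc.symm a.2]
  simp

@[simp] lemma Lc_x : Lc A x hx0 hc x = 1 := by
  have h1 : (K ∙ x).linearProjOfIsCompl A hc.symm x
      = ⟨x, Submodule.mem_span_singleton_self x⟩ :=
    Submodule.linearProjOfIsCompl_apply_left hc.symm ⟨x, Submodule.mem_span_singleton_self x⟩
  simp only [Lc, LinearMap.coe_comp, Function.comp_apply, h1]
  rw [LinearEquiv.coe_coe, LinearEquiv.symm_apply_eq]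
  ext
  simp

lemma decomp (e : E) : ((Pc A x hc e : E)) + Lc A x hx0 hc e • x = e := by
  have h := Submodule.projection_add_projection_eq_self hc e
  have h2 : ((K ∙ x).linearProjOfIsCompl A hc.symm e : E) = Lc A x hx0 hc e • x := by
    have : LinearEquiv.toSpanNonzeroSingleton K E x hx0 (Lc A x hx0 hc e)
        = (K ∙ x).linearProjOfIsCompl A hc.symm e := by
      simp [Lc]
    rw [← this]
    simp [LinearEquiv.toSpanNonzeroSingleton]
  rw [← h2]; exact h

lemma eqPL {e e' : E} (hP : Pc A x hc e = Pc A x hc e')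
    (hL : Lc A x hx0 hc e = Lc A x hx0 hc e') : e = e' := by
  rw [← decomp A x hx0 hc e, ← decomp A x hx0 hc e', hP, hL]

variable (circ brk : ↥A →ₗ[K] ↥A →ₗ[K] ↥A)

noncomputable def mulF (S T : ↥A →ₗ[K] ↥A) (k : K) : E →ₗ[K] E →ₗ[K] E :=
  LinearMap.mk₂ K
    (fun u v => ((circ (Pc A x hc u) (Pc A x hc v)
        + Lc A x hx0 hc u • S (Pc A x hc v)
        + Lc A x hx0 hc v • T (Pc A x hc u) : A) : E)
      + (Lc A x hx0 hc u * Lc A x hx0 hc v * k) • x)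
    (fun u u' v => by
      simp only [map_add, map_smul, LinearMap.add_apply, LinearMap.smul_apply,
        Submodule.coe_add, Submodule.coe_smul, smul_eq_mul]
      match_scalars <;> ring)
    (fun c u v => by
      simp only [map_add, map_smul, LinearMap.add_apply, LinearMap.smul_apply,
        Submodule.coe_add, Submodule.coe_smul, smul_eq_mul]
      match_scalars <;> ring)
    (fun u v v' => by
      simp only [map_add, map_smul, LinearMap.add_apply, LinearMap.smul_apply,
        Submodule.coe_add, Submodule.coe_smul, smul_eq_mul]
      match_scalars <;> ring)
    (fun c u v => by
      simp only [map_add, map_smul, LinearMap.add_apply, LinearMap.smul_apply,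
        Submodule.coe_add, Submodule.coe_smul, smul_eq_mul]
      match_scalars <;> ring)

noncomputable def brF : E →ₗ[K] E →ₗ[K] E :=
  LinearMap.mk₂ K
    (fun u v => ((brk (Pc A x hc u) (Pc A x hc v) : A) : E))
    (fun u u' v => by simp)
    (fun c u v => by simp)
    (fun u v v' => by simp)
    (fun c u v => by simp)

variable (S T : ↥A →ₗ[K] ↥A) (k : K)

lemma mulF_apply (u v : E) : mulF A x hx0 hc circ S T k u v
    = ((circ (Pc A x hc u) (Pc A x hc v)
        + Lc A x hx0 hc u • S (Pc A x hc v)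
        + Lc A x hx0 hc v • T (Pc A x hc u) : A) : E)
      + (Lc A x hx0 hc u * Lc A x hx0 hc v * k) • x := rfl

lemma brF_apply (u v : E) : brF A x hc brk u v
    = ((brk (Pc A x hc u) (Pc A x hc v) : A) : E) := rfl

@[simp] lemma Pc_mulF (u v : E) : Pc A x hc (mulF A x hx0 hc circ S T k u v)
    = circ (Pc A x hc u) (Pc A x hc v)
        + Lc A x hx0 hc u • S (Pc A x hc v)
        + Lc A x hx0 hc v • T (Pc A x hc u) := by
  rw [mulF_apply]; simp

@[simp] lemma Lc_mulF (u v : E) : Lc A x hx0 hc (mulF A x hx0 hc circ S T k u v)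
    = Lc A x hx0 hc u * Lc A x hx0 hc v * k := by
  rw [mulF_apply]; simp

@[simp] lemma Pc_brF (u v : E) : Pc A x hc (brF A x hc brk u v)
    = brk (Pc A x hc u) (Pc A x hc v) := by
  simp [brF]

@[simp] lemma Lc_brF (u v : E) : Lc A x hx0 hc (brF A x hc brk u v) = 0 := by
  simp [brF]

lemma mulF_coe (a b : A) :
    mulF A x hx0 hc circ S T k (a : E) (b : E) = ((circ a b : A) : E) := by
  rw [mulF_apply]; simp

lemma brF_coe (a b : A) :
    brF A x hc brk (a : E) (b : E) = ((brk a b : A) : E) := by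
  rw [brF_apply]; simp

lemma isGD_F
    (hGD : IsGD (fun a b : ↥A => circ a b) (fun a b => brk a b))
    (hFN2 : ∀ a b, S (circ a b) = circ (S a) b + circ a (S b) - circ (T a) b)
    (hFN3 : ∀ a b, T (circ a b) - T (circ b a) = circ a (T b) - circ b (T a))
    (hFN4 : ∀ a, T (T a) = T (S a) - S (T a) + k • T a)
    (hFN6 : ∀ a b, circ (S a) b = circ (S b) a)
    (hFN7 : ∀ a b, T (circ a b) = circ (T a) b)
    (hFN9 : ∀ a, T (S a) = k • S a)
    (hGF1 : ∀ a b, brk a (T b) + T (brk b a) = 0)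
    (hGF3 : ∀ a b, brk a (S b) - brk b (S a) - S (brk a b) = 0) :
    IsGD (fun u v : E => mulF A x hx0 hc circ S T k u v)
      (fun u v : E => brF A x hc brk u v) := by
  have hN1 : ∀ a b c : ↥A, circ (circ a b) c - circ a (circ b c)
      = circ (circ b a) c - circ b (circ a c) := hGD.1.1
  have hN2 : ∀ a b c : ↥A, circ (circ a b) c = circ (circ a c) b := hGD.1.2
  have hLalt : ∀ a : ↥A, brk a a = 0 := hGD.2.1.1
  have hLjac : ∀ a b c : ↥A, brk a (brk b c) = brk (brk a b) c + brk b (brk a c) := hGD.2.1.2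
  have hGDc : ∀ a b c : ↥A, brk a (circ b c) - brk c (circ b a) + circ (brk b a) c
      - circ (brk b c) a - circ b (brk a c) = 0 := hGD.2.2
  refine ⟨⟨?_, ?_⟩, ⟨?_, ?_⟩, ?_⟩
  · intro u v w
    refine eqPL A x hx0 hc ?_ ?_
    · simp only [map_sub, map_add, map_smul, Pc_mulF, Lc_mulF, LinearMap.add_apply,
        LinearMap.smul_apply, smul_eq_mul]
      linear_combination (norm := module)
        hN1 (Pc A x hc u) (Pc A x hc v) (Pc A x hc w)
        + (Lc A x hx0 hc v) • hFN2 (Pc A x hc u) (Pc A x hc w)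
        - (Lc A x hx0 hc u) • hFN2 (Pc A x hc v) (Pc A x hc w)
        + (Lc A x hx0 hc w) • hFN3 (Pc A x hc u) (Pc A x hc v)
        + (Lc A x hx0 hc w * Lc A x hx0 hc v) • hFN4 (Pc A x hc u)
        - (Lc A x hx0 hc w * Lc A x hx0 hc u) • hFN4 (Pc A x hc v)
    · simp only [map_sub, Lc_mulF]; ring
  · intro u v w
    refine eqPL A x hx0 hc ?_ ?_
    · simp only [map_sub, map_add, map_smul, Pc_mulF, Lc_mulF, LinearMap.add_apply,
        LinearMap.smul_apply, smul_eq_mul]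
      linear_combination (norm := module)
        hN2 (Pc A x hc u) (Pc A x hc v) (Pc A x hc w)
        + (Lc A x hx0 hc u) • hFN6 (Pc A x hc v) (Pc A x hc w)
        + (Lc A x hx0 hc w) • hFN7 (Pc A x hc u) (Pc A x hc v)
        - (Lc A x hx0 hc v) • hFN7 (Pc A x hc u) (Pc A x hc w)
        + (Lc A x hx0 hc w * Lc A x hx0 hc u) • hFN9 (Pc A x hc v)
        - (Lc A x hx0 hc v * Lc A x hx0 hc u) • hFN9 (Pc A x hc w)
    · simp only [Lc_mulF]; ring
  · intro u
    show brF A x hc brk u u = 0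
    rw [brF_apply]
    rw [hLalt]
    simp
  · intro u v w
    simp only [brF_apply, Pc_coe, ← Submodule.coe_add]
    exact congrArg _ (hLjac _ _ _)
  · intro u v w
    refine eqPL A x hx0 hc ?_ ?_
    · simp only [map_sub, map_add, map_smul, map_zero, Pc_mulF, Lc_mulF, Pc_brF, Lc_brF,
        LinearMap.add_apply, LinearMap.smul_apply, smul_eq_mul, Pc_coe, mul_zero, zero_mul,
        zero_smul, add_zero, smul_zero]
      linear_combination (norm := module)
        hGDc (Pc A x hc u) (Pc A x hc v) (Pc A x hc w)
        + (Lc A x hx0 hc v) • hGF3 (Pc A x hc u) (Pc A x hc w)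
        + (Lc A x hx0 hc w) • hGF1 (Pc A x hc u) (Pc A x hc v)
        - (Lc A x hx0 hc u) • hGF1 (Pc A x hc w) (Pc A x hc v)
    · simp only [map_sub, map_add, map_zero, Lc_mulF, Lc_brF, Lc_coe, zero_mul, mul_zero]
      ring

/-- scaling `x` by `β`, identity on `A` -/
noncomputable def scaleXL (β : K) : E →ₗ[K] E where
  toFun e := ((Pc A x hc e : A) : E) + (β * Lc A x hx0 hc e) • x
  map_add' u v := by
    simp only [map_add, mul_add, Submodule.coe_add]
    match_scalars <;> ring
  map_smul' c u := by
    simp only [map_smul, Submodule.coe_smul, smul_eq_mul, RingHom.id_apply]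
    match_scalars <;> ring

@[simp] lemma Pc_scaleXL (β : K) (e : E) :
    Pc A x hc (scaleXL A x hx0 hc β e) = Pc A x hc e := by
  simp [scaleXL]

@[simp] lemma Lc_scaleXL (β : K) (e : E) :
    Lc A x hx0 hc (scaleXL A x hx0 hc β e) = β * Lc A x hx0 hc e := by
  simp [scaleXL]

/-- the scaling as a linear equivalence (declared below) -/
noncomputable def scaleX (β : K) (hβ : β ≠ 0) : E ≃ₗ[K] E :=
  LinearEquiv.ofLinear (scaleXL A x hx0 hc β) (scaleXL A x hx0 hc β⁻¹)
    (by
      ext e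
      simp only [LinearMap.comp_apply, LinearMap.id_apply]
      refine eqPL A x hx0 hc ?_ ?_ <;> simp [← mul_assoc, mul_inv_cancel₀ hβ])
    (by
      ext e
      simp only [LinearMap.comp_apply, LinearMap.id_apply]
      refine eqPL A x hx0 hc ?_ ?_ <;> simp [← mul_assoc, inv_mul_cancel₀ hβ])

@[simp] lemma scaleX_apply (β : K) (hβ : β ≠ 0) (e : E) :
    scaleX A x hx0 hc β hβ e = ((Pc A x hc e : A) : E) + (β * Lc A x hx0 hc e) • x := rfl

lemma scaleX_coe (β : K) (hβ : β ≠ 0) (a : A) :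
    scaleX A x hx0 hc β hβ (a : E) = (a : E) := by
  simp

@[simp] lemma Pc_scaleX (β : K) (hβ : β ≠ 0) (e : E) :
    Pc A x hc (scaleX A x hx0 hc β hβ e) = Pc A x hc e := by
  rw [show scaleX A x hx0 hc β hβ e = scaleXL A x hx0 hc β e from rfl, Pc_scaleXL]

@[simp] lemma Lc_scaleX (β : K) (hβ : β ≠ 0) (e : E) :
    Lc A x hx0 hc (scaleX A x hx0 hc β hβ e) = β * Lc A x hx0 hc e := by
  rw [show scaleX A x hx0 hc β hβ e = scaleXL A x hx0 hc β e from rfl, Lc_scaleXL]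

/-- translation of `x` by an element of `A` -/
noncomputable def transXL (a0 : A) : E →ₗ[K] E where
  toFun e := e + Lc A x hx0 hc e • (a0 : E)
  map_add' u v := by simp only [map_add, add_smul]; abel
  map_smul' c u := by
    simp only [map_smul, smul_eq_mul, RingHom.id_apply, mul_smul, smul_add]

@[simp] lemma Pc_transXL (a0 : A) (e : E) :
    Pc A x hc (transXL A x hx0 hc a0 e) = Pc A x hc e + Lc A x hx0 hc e • a0 := by
  simp [transXL]

@[simp] lemma Lc_transXL (a0 : A) (e : E) :
    Lc A x hx0 hc (transXL A x hx0 hc a0 e) = Lc A x hx0 hc e := by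
  simp [transXL]

noncomputable def transX (a0 : A) : E ≃ₗ[K] E :=
  LinearEquiv.ofLinear (transXL A x hx0 hc a0) (transXL A x hx0 hc (-a0))
    (by
      ext e
      simp only [LinearMap.comp_apply, LinearMap.id_apply]
      refine eqPL A x hx0 hc ?_ ?_ <;> simp)
    (by
      ext e
      simp only [LinearMap.comp_apply, LinearMap.id_apply]
      refine eqPL A x hx0 hc ?_ ?_ <;> simp)

lemma transX_apply (a0 : A) (e : E) :
    transX A x hx0 hc a0 e = e + Lc A x hx0 hc e • (a0 : E) := rfl

lemma transX_symm_apply (a0 : A) (e : E) :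
    (transX A x hx0 hc a0).symm e = e - Lc A x hx0 hc e • (a0 : E) := by
  show transXL A x hx0 hc (-a0) e = _
  simp [transXL, sub_eq_add_neg]

@[simp] lemma transX_coe (a0 : A) (a : A) :
    transX A x hx0 hc a0 (a : E) = (a : E) := by
  simp [transX_apply]

@[simp] lemma transX_symm_coe (a0 : A) (a : A) :
    (transX A x hx0 hc a0).symm (a : E) = (a : E) := by
  simp [transX_symm_apply]

/-- conjugation of a bilinear map by a linear automorphism -/
noncomputable def conjBil (φ : E ≃ₗ[K] E) (m : E →ₗ[K] E →ₗ[K] E) : E →ₗ[K] E →ₗ[K] E :=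
  LinearMap.mk₂ K (fun u v => φ (m (φ.symm u) (φ.symm v)))
    (fun u u' v => by simp) (fun c u v => by simp)
    (fun u v v' => by simp) (fun c u v => by simp)

@[simp] lemma conjBil_apply (φ : E ≃ₗ[K] E) (m : E →ₗ[K] E →ₗ[K] E) (u v : E) :
    conjBil φ m u v = φ (m (φ.symm u) (φ.symm v)) := rfl

lemma isNovikov_conj (φ : E ≃ₗ[K] E) (m : E →ₗ[K] E →ₗ[K] E)
    (h : IsNovikov (fun u v : E => m u v)) :
    IsNovikov (fun u v : E => conjBil φ m u v) := by
  have h1 : ∀ u v w : E, m (m u v) w - m u (m v w) = m (m v u) w - m v (m u w) := h.1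
  have h2 : ∀ u v w : E, m (m u v) w = m (m u w) v := h.2
  constructor
  · intro u v w
    simp only [conjBil_apply, LinearEquiv.symm_apply_apply, ← map_sub]
    exact congrArg φ (h1 _ _ _)
  · intro u v w
    simp only [conjBil_apply, LinearEquiv.symm_apply_apply]
    exact congrArg φ (h2 _ _ _)

lemma isLie_conj (φ : E ≃ₗ[K] E) (m : E →ₗ[K] E →ₗ[K] E)
    (h : IsLieBracket (fun u v : E => m u v)) :
    IsLieBracket (fun u v : E => conjBil φ m u v) := by
  have h1 : ∀ u : E, m u u = 0 := h.1
  have h2 : ∀ u v w : E, m u (m v w) = m (m u v) w + m v (m u w) := h.2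
  constructor
  · intro u
    simp only [conjBil_apply, LinearEquiv.symm_apply_apply]
    rw [h1, map_zero]
  · intro u v w
    simp only [conjBil_apply, LinearEquiv.symm_apply_apply, ← map_add]
    exact congrArg φ (h2 _ _ _)

lemma isGD_conj (φ : E ≃ₗ[K] E) (m b : E →ₗ[K] E →ₗ[K] E)
    (h : IsGD (fun u v : E => m u v) (fun u v : E => b u v)) :
    IsGD (fun u v : E => conjBil φ m u v) (fun u v : E => conjBil φ b u v) := by
  have h3 : ∀ u v w : E, b u (m v w) - b w (m v u) + m (b v u) w - m (b v w) u
      - m v (b u w) = 0 := h.2.2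
  refine ⟨isNovikov_conj φ m h.1, isLie_conj φ b h.2.1, ?_⟩
  intro u v w
  simp only [conjBil_apply, LinearEquiv.symm_apply_apply, ← map_add, ← map_sub]
  rw [h3, map_zero]

/-- a linear form vanishing on brackets vanishes if the bracket spans -/
lemma vanish_of_perfect (brk : ↥A →ₗ[K] ↥A →ₗ[K] ↥A)
    (hperf : Submodule.span K {c : ↥A | ∃ a b : ↥A, c = brk a b} = ⊤)
    (f : ↥A →ₗ[K] K) (h : ∀ a b : ↥A, f (brk a b) = 0) : f = 0 := by
  ext c
  have hc' : c ∈ Submodule.span K {c : ↥A | ∃ a b : ↥A, c = brk a b} := by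
    rw [hperf]; trivial
  induction hc' using Submodule.span_induction with
  | mem z hz => obtain ⟨a, b, rfl⟩ := hz; exact h a b
  | zero => simp
  | add y z _ _ hy hz => simp [hy, hz]
  | smul c y _ hy => simp [hy]

end Aux

section Helpers
variable {K A : Type*} [Field K] [AddCommGroup A] [Module K A]
variable (circ brk : A →ₗ[K] A →ₗ[K] A) (S T : A →ₗ[K] A) (k : K)

lemma flag_of_clean
    (h2 : ∀ a b, S (circ a b) = circ (S a) b + circ a (S b) - circ (T a) b)
    (h3 : ∀ a b, T (circ a b) - T (circ b a) = circ a (T b) - circ b (T a))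
    (h4 : ∀ a, T (T a) = T (S a) - S (T a) + k • T a)
    (h6 : ∀ a b, circ (S a) b = circ (S b) a)
    (h7 : ∀ a b, T (circ a b) = circ (T a) b)
    (h9 : ∀ a, T (S a) = k • S a)
    (g1 : ∀ a b, brk a (T b) + T (brk b a) = 0)
    (g3 : ∀ a b, brk a (S b) - brk b (S a) - S (brk a b) = 0) :
    IsFlagDatum circ brk ⟨0, 0, S, T, 0, k, 0, 0⟩ := by
  refine ⟨?_, ?_, ?_, ?_, ?_, ?_, ?_, ?_, ?_, ?_, ?_, ?_, ?_, ?_, ?_, ?_, ?_, ?_, ?_⟩ <;>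
    intros <;> simp
  · simpa using h2 _ _
  · simpa using h3 _ _
  · simpa using h4 _
  · exact h6 _ _
  · simpa using h7 _ _
  · simpa using h9 _
  · simpa using g1 _ _
  · simpa using g3 _ _

lemma clean_of_flag (d : FlagData K A) (h : IsFlagDatum circ brk d)
    (hp : d.p = 0) (hq : d.q = 0) (he : d.eta = 0) (hD : d.D = 0) (ha : d.a1 = 0) :
    (∀ a b, d.S (circ a b) = circ (d.S a) b + circ a (d.S b) - circ (d.T a) b) ∧
    (∀ a b, d.T (circ a b) - d.T (circ b a) = circ a (d.T b) - circ b (d.T a)) ∧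
    (∀ a, d.T (d.T a) = d.T (d.S a) - d.S (d.T a) + d.k • d.T a) ∧
    (∀ a b, circ (d.S a) b = circ (d.S b) a) ∧
    (∀ a b, d.T (circ a b) = circ (d.T a) b) ∧
    (∀ a, d.T (d.S a) = d.k • d.S a) ∧
    (∀ a b, brk a (d.T b) + d.T (brk b a) = 0) ∧
    (∀ a b, brk a (d.S b) - brk b (d.S a) - d.S (brk a b) = 0) := by
  obtain ⟨-, -, f2, f3, f4, -, f6, f7, -, f9, -, -, -, g1, -, g3, -, -, -⟩ := h
  refine ⟨fun a b => ?_, fun a b => ?_, fun a => ?_, fun a b => ?_, fun a b => ?_,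
    fun a => ?_, fun a b => ?_, fun a b => ?_⟩
  · simpa [hp, hq] using f2 a b
  · simpa [hp] using f3 a b
  · simpa [hp, hq, ha] using f4 a
  · simpa [hq] using f6 a b
  · simpa [hp] using f7 a b
  · simpa [hq, ha] using f9 a
  · simpa [hp, hD, he] using g1 a b
  · simpa [hp, hq, hD, he] using g3 a b

end Helpers

end GDExt

namespace GDExt

set_option maxHeartbeats 4000000 in
/-- Corollary, part 2, special case: if moreover the center of `(A,[·,·])`
is trivial, then `Extd(E,A)` is in bijection with `SF5(A)/≈`. -/
theorem extd_bijection_SF5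
    {K E : Type*} [Field K] [AddCommGroup E] [Module K E]
    (A : Submodule K E) (x : E) (hx : x ∉ A) (hc : IsCompl A (K ∙ x))
    (circ brk : ↥A →ₗ[K] ↥A →ₗ[K] ↥A)
    (hGD : IsGD (fun a b => circ a b) (fun a b => brk a b))
    (hperf : Submodule.span K {c : ↥A | ∃ a b : ↥A, c = brk a b} = ⊤)
    (hder : ∀ D : ↥A →ₗ[K] ↥A,
      (∀ a b : ↥A, D (brk a b) = brk (D a) b + brk a (D b)) →
      ∃ a0 : ↥A, ∀ a : ↥A, D a = brk a0 a)
    -- the center of (A, [·,·]) is trivial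
    (hcenter : ∀ a : ↥A, (∀ b : ↥A, brk a b = 0) → a = 0) :
    Nonempty
      (Quot (fun d d' : {d : FlagData K ↥A // IsFlagDatum circ brk d ∧
               d.p = 0 ∧ d.q = 0 ∧ d.eta = 0 ∧ d.D = 0 ∧ d.a1 = 0} =>
          -- equivalence ≈ on SF5(A)
          ∃ β : K, β ≠ 0 ∧ d.1.S = β • d'.1.S ∧ d.1.T = β • d'.1.T ∧ d.1.k = β * d'.1.k)
      ≃ Quot (GDStrEquiv A circ brk)) := by
  classical
  have hx0 : x ≠ 0 := fun h => hx (h ▸ A.zero_mem)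
  have hbrk_alt : ∀ a : ↥A, brk a a = 0 := hGD.2.1.1
  have hbrk_anti : ∀ a c : ↥A, brk c a = - brk a c := by
    intro a c
    have h := hbrk_alt (a + c)
    simp only [map_add, LinearMap.add_apply] at h
    rw [hbrk_alt, hbrk_alt] at h
    have h2 : brk a c + brk c a = 0 := by
      have := h
      abel_nf at this ⊢
      linear_combination (norm := abel) this
    exact eq_neg_of_add_eq_zero_right h2
  -- the unified-product structure attached to a flag datum in `SF5`
  have FmGD : ∀ d : {d : FlagData K ↥A // IsFlagDatum circ brk d ∧
        d.p = 0 ∧ d.q = 0 ∧ d.eta = 0 ∧ d.D = 0 ∧ d.a1 = 0},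
      IsGD (fun u v : E => mulF A x hx0 hc circ d.1.S d.1.T d.1.k u v)
        (fun u v : E => brF A x hc brk u v) := by
    intro d
    obtain ⟨h2, h3, h4, h6, h7, h9, g1, g3⟩ := clean_of_flag circ brk d.1 d.2.1
      d.2.2.1 d.2.2.2.1 d.2.2.2.2.1 d.2.2.2.2.2.1 d.2.2.2.2.2.2
    exact isGD_F A x hx0 hc circ brk d.1.S d.1.T d.1.k hGD h2 h3 h4 h6 h7 h9 g1 g3
  let Fm : {d : FlagData K ↥A // IsFlagDatum circ brk d ∧
        d.p = 0 ∧ d.q = 0 ∧ d.eta = 0 ∧ d.D = 0 ∧ d.a1 = 0} → GDStrOn A circ brk :=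
    fun d => ⟨(mulF A x hx0 hc circ d.1.S d.1.T d.1.k, brF A x hc brk),
      FmGD d, fun a c => ⟨mulF_coe A x hx0 hc circ d.1.S d.1.T d.1.k a c,
        brF_coe A x hc brk a c⟩⟩
  -- Fm sends related datums to equivalent structures
  have hrel : ∀ d d' : {d : FlagData K ↥A // IsFlagDatum circ brk d ∧
        d.p = 0 ∧ d.q = 0 ∧ d.eta = 0 ∧ d.D = 0 ∧ d.a1 = 0},
      (∃ β : K, β ≠ 0 ∧ d.1.S = β • d'.1.S ∧ d.1.T = β • d'.1.T ∧ d.1.k = β * d'.1.k) →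
      GDStrEquiv A circ brk (Fm d) (Fm d') := by
    rintro d d' ⟨β, hβ, hS, hT, hk⟩
    refine ⟨scaleX A x hx0 hc β hβ, fun u v => ?_, fun u v => ?_,
      fun a => scaleX_coe A x hx0 hc β hβ a⟩
    · show scaleX A x hx0 hc β hβ (mulF A x hx0 hc circ d.1.S d.1.T d.1.k u v)
        = mulF A x hx0 hc circ d'.1.S d'.1.T d'.1.k
          (scaleX A x hx0 hc β hβ u) (scaleX A x hx0 hc β hβ v)
      refine eqPL A x hx0 hc ?_ ?_
      · simp only [Pc_scaleX, Lc_scaleX, Pc_mulF, Lc_mulF, hS, hT, LinearMap.smul_apply]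
        match_scalars <;> ring
      · simp only [Pc_scaleX, Lc_scaleX, Lc_mulF, hk]
        ring
    · show scaleX A x hx0 hc β hβ (brF A x hc brk u v)
        = brF A x hc brk (scaleX A x hx0 hc β hβ u) (scaleX A x hx0 hc β hβ v)
      simp only [brF_apply, Pc_scaleX]
      rw [scaleX_coe]
  -- GDStrEquiv is an equivalence relation
  have hreflR : ∀ s : GDStrOn A circ brk, GDStrEquiv A circ brk s s :=
    fun s => ⟨LinearEquiv.refl K E, fun u v => rfl, fun u v => rfl, fun a => rfl⟩
  have hsymmR : ∀ {s s' : GDStrOn A circ brk},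
      GDStrEquiv A circ brk s s' → GDStrEquiv A circ brk s' s := by
    rintro s s' ⟨φ, h1, h2, h3⟩
    refine ⟨φ.symm, fun u v => ?_, fun u v => ?_, fun a => ?_⟩
    · have h := h1 (φ.symm u) (φ.symm v)
      rw [φ.apply_symm_apply, φ.apply_symm_apply] at h
      rw [← h, φ.symm_apply_apply]
    · have h := h2 (φ.symm u) (φ.symm v)
      rw [φ.apply_symm_apply, φ.apply_symm_apply] at h
      rw [← h, φ.symm_apply_apply]
    · rw [LinearEquiv.symm_apply_eq]
      exact (h3 a).symm
  have htransR : ∀ {s s' s'' : GDStrOn A circ brk},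
      GDStrEquiv A circ brk s s' → GDStrEquiv A circ brk s' s'' →
      GDStrEquiv A circ brk s s'' := by
    rintro s s' s'' ⟨φ, h1, h2, h3⟩ ⟨ψ, g1, g2, g3⟩
    refine ⟨φ.trans ψ, fun u v => ?_, fun u v => ?_, fun a => ?_⟩
    · simp only [LinearEquiv.trans_apply, h1, g1]
    · simp only [LinearEquiv.trans_apply, h2, g2]
    · simp only [LinearEquiv.trans_apply, h3, g3]
  have hequivR : Equivalence (GDStrEquiv A circ brk) :=
    ⟨hreflR, fun h => hsymmR h, fun h h' => htransR h h'⟩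
  -- injectivity core
  have hinj : ∀ d d' : {d : FlagData K ↥A // IsFlagDatum circ brk d ∧
        d.p = 0 ∧ d.q = 0 ∧ d.eta = 0 ∧ d.D = 0 ∧ d.a1 = 0},
      GDStrEquiv A circ brk (Fm d) (Fm d') →
      (∃ β : K, β ≠ 0 ∧ d.1.S = β • d'.1.S ∧ d.1.T = β • d'.1.T ∧ d.1.k = β * d'.1.k) := by
    rintro d d' ⟨φ, hmul, hbr, hA⟩
    have hmul' : ∀ u v : E, φ (mulF A x hx0 hc circ d.1.S d.1.T d.1.k u v)
        = mulF A x hx0 hc circ d'.1.S d'.1.T d'.1.k (φ u) (φ v) := hmul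
    have hbr' : ∀ u v : E, φ (brF A x hc brk u v) = brF A x hc brk (φ u) (φ v) := hbr
    have hPφx : Pc A x hc (φ x) = 0 := by
      refine hcenter _ fun a => ?_
      have h := hbr' x ((a : E))
      rw [brF_apply, brF_apply, Pc_x, map_zero, LinearMap.zero_apply] at h
      rw [hA a] at h
      simp only [Submodule.coe_zero, map_zero, Pc_coe] at h
      exact_mod_cast h.symm
    have hβ : Lc A x hx0 hc (φ x) ≠ 0 := by
      intro h0
      have hzero : φ x = 0 := by
        rw [← decomp A x hx0 hc (φ x), hPφx, h0]
        simp
      exact hx0 (φ.injective (by rw [hzero, map_zero]))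
    have hφx : φ x = Lc A x hx0 hc (φ x) • x := by
      conv_lhs => rw [← decomp A x hx0 hc (φ x)]
      rw [hPφx]
      simp
    set β := Lc A x hx0 hc (φ x) with hβdef
    have hmxaL : ∀ (SS TT : ↥A →ₗ[K] ↥A) (kk : K) (a : ↥A),
        mulF A x hx0 hc circ SS TT kk x ((a : E)) = ((SS a : ↥A) : E) := by
      intro SS TT kk a
      rw [mulF_apply]
      simp [LinearMap.map_zero₂]
    have hmaxL : ∀ (SS TT : ↥A →ₗ[K] ↥A) (kk : K) (a : ↥A),
        mulF A x hx0 hc circ SS TT kk ((a : E)) x = ((TT a : ↥A) : E) := by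
      intro SS TT kk a
      rw [mulF_apply]
      simp
    have hmxxL : ∀ (SS TT : ↥A →ₗ[K] ↥A) (kk : K),
        mulF A x hx0 hc circ SS TT kk x x = kk • x := by
      intro SS TT kk
      rw [mulF_apply]
      simp [LinearMap.map_zero₂]
    have hSeq : ∀ a : ↥A, d.1.S a = β • d'.1.S a := by
      intro a
      have h := hmul' x ((a : E))
      rw [hmxaL, hA, hφx, hA, map_smul, LinearMap.smul_apply, hmxaL] at h
      exact_mod_cast h
    have hTeq : ∀ a : ↥A, d.1.T a = β • d'.1.T a := by
      intro a
      have h := hmul' ((a : E)) x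
      rw [hmaxL, hA, hφx, hA, map_smul, hmaxL] at h
      exact_mod_cast h
    have hkeq : d.1.k = β * d'.1.k := by
      have h := hmul' x x
      rw [hmxxL, hφx] at h
      simp only [map_smul, LinearMap.smul_apply, hmxxL, hφx, smul_smul] at h
      have h2 : d.1.k * β = β * (β * d'.1.k) := smul_left_injective K hx0 h
      have h3 : d.1.k * β = (β * d'.1.k) * β := by rw [h2]; ring
      exact mul_right_cancel₀ hβ h3
    exact ⟨β, hβ, LinearMap.ext hSeq, LinearMap.ext hTeq, hkeq⟩
  -- surjectivity core
  have hsurj : ∀ s : GDStrOn A circ brk,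
      ∃ d : {d : FlagData K ↥A // IsFlagDatum circ brk d ∧
        d.p = 0 ∧ d.q = 0 ∧ d.eta = 0 ∧ d.D = 0 ∧ d.a1 = 0},
      GDStrEquiv A circ brk (Fm d) s := by
    rintro ⟨⟨m, b⟩, hsGD, hres⟩
    have hbalt : ∀ u : E, b u u = 0 := hsGD.2.1.1
    have hbjac : ∀ u v w : E, b u (b v w) = b (b u v) w + b v (b u w) := hsGD.2.1.2
    have hban : ∀ u v : E, b v u = - b u v := by
      intro u v
      have h := hbalt (u + v)
      simp only [map_add, LinearMap.add_apply] at h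
      rw [hbalt, hbalt] at h
      have h2 : b u v + b v u = 0 := by
        abel_nf at h ⊢
        linear_combination (norm := abel) h
      exact eq_neg_of_add_eq_zero_right h2
    have hmres : ∀ a c : ↥A, m ((a : E)) ((c : E)) = ((circ a c : ↥A) : E) :=
      fun a c => (hres a c).1
    have hbres : ∀ a c : ↥A, b ((a : E)) ((c : E)) = ((brk a c : ↥A) : E) :=
      fun a c => (hres a c).2
    obtain ⟨eta0, heta0⟩ : ∃ f : ↥A →ₗ[K] K, ∀ a : ↥A, f a = Lc A x hx0 hc (b x ((a : E))) :=
      ⟨(Lc A x hx0 hc) ∘ₗ (b x) ∘ₗ A.subtype, fun a => rfl⟩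
    obtain ⟨D0, hD0⟩ : ∃ f : ↥A →ₗ[K] ↥A, ∀ a : ↥A, f a = Pc A x hc (b x ((a : E))) :=
      ⟨(Pc A x hc) ∘ₗ (b x) ∘ₗ A.subtype, fun a => rfl⟩
    have hbxa : ∀ a : ↥A, b x ((a : E)) = ((D0 a : ↥A) : E) + eta0 a • x := by
      intro a
      rw [heta0, hD0]
      exact (decomp A x hx0 hc (b x ((a : E)))).symm
    have heta_br : ∀ a c : ↥A, eta0 (brk a c) = 0 := by
      intro a c
      have hj := hbjac x ((a : E)) ((c : E))
      rw [hbres a c, hbxa (brk a c), hbxa a, hbxa c] at hj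
      simp only [map_add, map_smul, LinearMap.add_apply, LinearMap.smul_apply] at hj
      rw [hbres (D0 a) c, hbres a (D0 c)] at hj
      rw [show b ((a : E)) x = - b x ((a : E)) from hban x ((a : E)), hbxa a] at hj
      have h2 := congrArg (Lc A x hx0 hc) hj
      simp only [map_add, map_smul, map_neg, Lc_coe, Lc_x, smul_eq_mul, mul_one,
        mul_zero, add_zero, zero_add, mul_neg, smul_zero, neg_zero] at h2
      rw [h2, ← heta0 c]
      ring
    have heta0' : ∀ a : ↥A, eta0 a = 0 := by
      have h := vanish_of_perfect A brk hperf eta0 heta_br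
      intro a
      rw [h]
      rfl
    have hbxa' : ∀ a : ↥A, b x ((a : E)) = ((D0 a : ↥A) : E) := by
      intro a
      rw [hbxa a, heta0', zero_smul, add_zero]
    have hD0der : ∀ a c : ↥A, D0 (brk a c) = brk (D0 a) c + brk a (D0 c) := by
      intro a c
      have hj := hbjac x ((a : E)) ((c : E))
      rw [hbres a c, hbxa' (brk a c), hbxa' a, hbxa' c] at hj
      rw [hbres (D0 a) c, hbres a (D0 c)] at hj
      exact_mod_cast hj
    obtain ⟨a0, ha0⟩ := hder D0 hD0der
    set φ : E ≃ₗ[K] E := transX A x hx0 hc a0 with hφdef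
    set m' := conjBil φ m with hm'def
    set b' := conjBil φ b with hb'def
    have hφa : ∀ a : ↥A, φ ((a : E)) = ((a : E)) := fun a => transX_coe A x hx0 hc a0 a
    have hφsa : ∀ a : ↥A, φ.symm ((a : E)) = ((a : E)) :=
      fun a => transX_symm_coe A x hx0 hc a0 a
    have hφsx : φ.symm x = x - ((a0 : E)) := by
      rw [hφdef, transX_symm_apply]
      simp
    have hm'res : ∀ a c : ↥A, m' ((a : E)) ((c : E)) = ((circ a c : ↥A) : E) := by
      intro a c
      rw [hm'def, conjBil_apply, hφsa, hφsa, hmres, hφa]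
    have hb'res : ∀ a c : ↥A, b' ((a : E)) ((c : E)) = ((brk a c : ↥A) : E) := by
      intro a c
      rw [hb'def, conjBil_apply, hφsa, hφsa, hbres, hφa]
    have hb'xa : ∀ a : ↥A, b' x ((a : E)) = 0 := by
      intro a
      rw [hb'def, conjBil_apply, hφsx, hφsa]
      rw [map_sub, LinearMap.sub_apply, hbxa' a, hbres a0 a, ← ha0 a]
      simp
    have hb'ax : ∀ a : ↥A, b' ((a : E)) x = 0 := by
      intro a
      rw [hb'def, conjBil_apply, hφsa]
      rw [hban (φ.symm x) ((a : E)), map_neg]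
      rw [show φ (b (φ.symm x) ((a : E))) = b' x ((a : E)) from by
        rw [hb'def, conjBil_apply, hφsa]]
      rw [hb'xa, neg_zero]
    have hb'xx : b' x x = 0 := by
      rw [hb'def, conjBil_apply, hbalt, map_zero]
    have hs'GD := isGD_conj φ m b hsGD
    have hm'N1 : ∀ u v w : E, m' (m' u v) w - m' u (m' v w)
        = m' (m' v u) w - m' v (m' u w) := hs'GD.1.1
    have hm'N2 : ∀ u v w : E, m' (m' u v) w = m' (m' u w) v := hs'GD.1.2
    have hgd' : ∀ u v w : E, b' u (m' v w) - b' w (m' v u) + m' (b' v u) w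
        - m' (b' v w) u - m' v (b' u w) = 0 := hs'GD.2.2
    obtain ⟨T0, hT0⟩ : ∃ f : ↥A →ₗ[K] ↥A, ∀ a : ↥A, f a = Pc A x hc (m' ((a : E)) x) :=
      ⟨(Pc A x hc) ∘ₗ (m'.flip x) ∘ₗ A.subtype, fun a => by simp [LinearMap.flip_apply]⟩
    obtain ⟨p0, hp0⟩ : ∃ f : ↥A →ₗ[K] K, ∀ a : ↥A, f a = Lc A x hx0 hc (m' ((a : E)) x) :=
      ⟨(Lc A x hx0 hc) ∘ₗ (m'.flip x) ∘ₗ A.subtype, fun a => by simp [LinearMap.flip_apply]⟩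
    obtain ⟨S0, hS0⟩ : ∃ f : ↥A →ₗ[K] ↥A, ∀ a : ↥A, f a = Pc A x hc (m' x ((a : E))) :=
      ⟨(Pc A x hc) ∘ₗ (m' x) ∘ₗ A.subtype, fun a => rfl⟩
    obtain ⟨q0, hq0⟩ : ∃ f : ↥A →ₗ[K] K, ∀ a : ↥A, f a = Lc A x hx0 hc (m' x ((a : E))) :=
      ⟨(Lc A x hx0 hc) ∘ₗ (m' x) ∘ₗ A.subtype, fun a => rfl⟩
    have hmax : ∀ a : ↥A, m' ((a : E)) x = ((T0 a : ↥A) : E) + p0 a • x := by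
      intro a
      rw [hT0, hp0]
      exact (decomp A x hx0 hc (m' ((a : E)) x)).symm
    have hmxa : ∀ a : ↥A, m' x ((a : E)) = ((S0 a : ↥A) : E) + q0 a • x := by
      intro a
      rw [hS0, hq0]
      exact (decomp A x hx0 hc (m' x ((a : E)))).symm
    have hmxx : m' x x = ((Pc A x hc (m' x x) : ↥A) : E) + Lc A x hx0 hc (m' x x) • x :=
      (decomp A x hx0 hc (m' x x)).symm
    have hstep1 : ∀ bb cc : ↥A, p0 (brk bb cc) = 0 ∧ brk cc (T0 bb) + T0 (brk bb cc) = 0 := by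
      intro bb cc
      have h := hgd' x ((bb : E)) ((cc : E))
      rw [hm'res bb cc, hb'xa (circ bb cc), hmax bb, hb'ax bb, hb'res bb cc,
        hmax (brk bb cc), hb'xa cc] at h
      simp only [map_add, map_smul, map_zero, LinearMap.add_apply, LinearMap.smul_apply,
        LinearMap.zero_apply, smul_zero, add_zero, zero_sub, sub_zero, zero_add] at h
      rw [hb'res cc (T0 bb), hb'ax cc] at h
      simp only [smul_zero, add_zero] at h
      constructor
      · have h2 := congrArg (Lc A x hx0 hc) h
        simp only [map_add, map_neg, map_sub, map_smul, map_zero, Lc_coe, Lc_x,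
          smul_eq_mul, mul_one, neg_zero, zero_sub, neg_add_rev, neg_neg] at h2
        linear_combination -h2
      · have h2 := congrArg (Pc A x hc) h
        simp only [map_add, map_neg, map_sub, map_smul, map_zero, Pc_coe, Pc_x,
          smul_zero, add_zero, neg_add_rev, neg_neg] at h2
        linear_combination (norm := module) -h2
    have hstep2 : ∀ aa cc : ↥A, q0 (brk aa cc) = 0 ∧
        brk aa (S0 cc) - brk cc (S0 aa) - S0 (brk aa cc) = 0 := by
      intro aa cc
      have h := hgd' ((aa : E)) x ((cc : E))
      rw [hmxa cc, hmxa aa, hb'xa aa, hb'xa cc, hb'res aa cc, hmxa (brk aa cc)] at h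
      simp only [map_add, map_smul, map_zero, LinearMap.add_apply, LinearMap.smul_apply,
        LinearMap.zero_apply, smul_zero, add_zero, zero_sub, sub_zero, zero_add] at h
      rw [hb'res aa (S0 cc), hb'res cc (S0 aa), hb'ax aa, hb'ax cc] at h
      simp only [smul_zero, add_zero] at h
      constructor
      · have h2 := congrArg (Lc A x hx0 hc) h
        simp only [map_add, map_neg, map_sub, map_smul, map_zero, Lc_coe, Lc_x,
          smul_eq_mul, mul_one, neg_zero, zero_sub, neg_add_rev, neg_neg] at h2
        linear_combination -h2
      · have h2 := congrArg (Pc A x hc) h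
        simp only [map_add, map_neg, map_sub, map_smul, map_zero, Pc_coe, Pc_x,
          smul_zero, add_zero, neg_add_rev, neg_neg] at h2
        linear_combination (norm := module) h2
    have hp0z : ∀ a : ↥A, p0 a = 0 := by
      have h := vanish_of_perfect A brk hperf p0 (fun a c => (hstep1 a c).1)
      intro a
      rw [h]
      rfl
    have hq0z : ∀ a : ↥A, q0 a = 0 := by
      have h := vanish_of_perfect A brk hperf q0 (fun a c => (hstep2 a c).1)
      intro a
      rw [h]
      rfl
    have ha1c : ∀ c : ↥A, brk c (Pc A x hc (m' x x)) = 0 := by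
      intro c
      have h := hgd' ((c : E)) x x
      rw [hmxx, hmxa c, hb'xa c, hb'xx, hb'ax c] at h
      simp only [map_add, map_smul, map_zero, LinearMap.add_apply, LinearMap.smul_apply,
        LinearMap.zero_apply, smul_zero, add_zero, sub_zero, zero_sub, zero_add,
        neg_eq_zero] at h
      rw [hb'res c (Pc A x hc (m' x x)), hb'ax c, hb'xa (S0 c), hb'xx] at h
      simp only [smul_zero, add_zero, sub_zero] at h
      exact_mod_cast h
    have ha1z : Pc A x hc (m' x x) = 0 :=
      hcenter _ fun c => by
        rw [show brk (Pc A x hc (m' x x)) c = - brk c (Pc A x hc (m' x x)) from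
          hbrk_anti c (Pc A x hc (m' x x)), ha1c c, neg_zero]
    have hmax0 : ∀ a : ↥A, m' ((a : E)) x = ((T0 a : ↥A) : E) := by
      intro a
      rw [hmax a, hp0z, zero_smul, add_zero]
    have hmxa0 : ∀ a : ↥A, m' x ((a : E)) = ((S0 a : ↥A) : E) := by
      intro a
      rw [hmxa a, hq0z, zero_smul, add_zero]
    have hmxx0 : m' x x = Lc A x hx0 hc (m' x x) • x := by
      conv_lhs => rw [hmxx]
      rw [ha1z]
      simp
    set kk := Lc A x hx0 hc (m' x x) with hkkdef
    have f7 : ∀ a c : ↥A, T0 (circ a c) = circ (T0 a) c := by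
      intro a c
      have h := hm'N2 ((a : E)) ((c : E)) x
      rw [hm'res a c, hmax0 (circ a c), hmax0 a, hm'res (T0 a) c] at h
      exact_mod_cast h
    have f6 : ∀ a c : ↥A, circ (S0 a) c = circ (S0 c) a := by
      intro a c
      have h := hm'N2 x ((a : E)) ((c : E))
      rw [hmxa0 a, hmxa0 c, hm'res (S0 a) c, hm'res (S0 c) a] at h
      exact_mod_cast h
    have f9 : ∀ a : ↥A, T0 (S0 a) = kk • S0 a := by
      intro a
      have h := hm'N2 x ((a : E)) x
      rw [hmxa0 a, hmax0 (S0 a), hmxx0, map_smul, LinearMap.smul_apply, hmxa0 a] at h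
      exact_mod_cast h
    have f3 : ∀ a c : ↥A, T0 (circ a c) - T0 (circ c a) = circ a (T0 c) - circ c (T0 a) := by
      intro a c
      have h := hm'N1 ((a : E)) ((c : E)) x
      rw [hm'res a c, hm'res c a, hmax0 (circ a c), hmax0 (circ c a), hmax0 a, hmax0 c,
        hm'res a (T0 c), hm'res c (T0 a)] at h
      have h2 : T0 (circ a c) - circ a (T0 c) = T0 (circ c a) - circ c (T0 a) := by
        exact_mod_cast h
      linear_combination (norm := module) h2
    have f2 : ∀ a c : ↥A, S0 (circ a c)
        = circ (S0 a) c + circ a (S0 c) - circ (T0 a) c := by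
      intro a c
      have h := hm'N1 ((a : E)) x ((c : E))
      rw [hmax0 a, hmxa0 a, hmxa0 c, hm'res a c, hm'res (T0 a) c, hm'res a (S0 c),
        hm'res (S0 a) c, hmxa0 (circ a c)] at h
      have h2 : circ (T0 a) c - circ a (S0 c) = circ (S0 a) c - S0 (circ a c) := by
        exact_mod_cast h
      linear_combination (norm := module) h2
    have f4 : ∀ a : ↥A, T0 (T0 a) = T0 (S0 a) - S0 (T0 a) + kk • T0 a := by
      intro a
      have h := hm'N1 ((a : E)) x x
      rw [hmax0 a, hmxa0 a, hmxx0, hmax0 (T0 a), hmax0 (S0 a), map_smul, hmax0 a,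
        hmxa0 (T0 a)] at h
      have h2 : T0 (T0 a) - kk • T0 a = T0 (S0 a) - S0 (T0 a) := by
        exact_mod_cast h
      linear_combination (norm := module) h2
    have gg1 : ∀ a c : ↥A, brk a (T0 c) + T0 (brk c a) = 0 := fun a c => (hstep1 c a).2
    have gg3 : ∀ a c : ↥A, brk a (S0 c) - brk c (S0 a) - S0 (brk a c) = 0 :=
      fun a c => (hstep2 a c).2
    have hm'eq : ∀ u v : E, m' u v = mulF A x hx0 hc circ S0 T0 kk u v := by
      intro u v
      conv_lhs => rw [← decomp A x hx0 hc u, ← decomp A x hx0 hc v]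
      simp only [map_add, map_smul, LinearMap.add_apply, LinearMap.smul_apply]
      rw [hm'res (Pc A x hc u) (Pc A x hc v), hmax0 (Pc A x hc u), hmxa0 (Pc A x hc v),
        hmxx0, mulF_apply]
      simp only [Submodule.coe_add, Submodule.coe_smul]
      match_scalars <;> ring
    have hb'eq : ∀ u v : E, b' u v = brF A x hc brk u v := by
      intro u v
      conv_lhs => rw [← decomp A x hx0 hc u, ← decomp A x hx0 hc v]
      simp only [map_add, map_smul, LinearMap.add_apply, LinearMap.smul_apply]
      rw [hb'res (Pc A x hc u) (Pc A x hc v), hb'xa (Pc A x hc v), hb'ax (Pc A x hc u),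
        hb'xx, brF_apply]
      simp
    refine ⟨⟨⟨0, 0, S0, T0, 0, kk, 0, 0⟩,
      flag_of_clean circ brk S0 T0 kk f2 f3 f4 f6 f7 f9 gg1 gg3, rfl, rfl, rfl, rfl, rfl⟩,
      φ.symm, fun u v => ?_, fun u v => ?_, fun a => hφsa a⟩
    · show φ.symm (mulF A x hx0 hc circ S0 T0 kk u v) = m (φ.symm u) (φ.symm v)
      rw [← hm'eq u v, hm'def, conjBil_apply, φ.symm_apply_apply]
    · show φ.symm (brF A x hc brk u v) = b (φ.symm u) (φ.symm v)
      rw [← hb'eq u v, hb'def, conjBil_apply, φ.symm_apply_apply]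



  -- assemble the bijection
  refine ⟨Equiv.ofBijective (Quot.map Fm hrel) ⟨?_, ?_⟩⟩
  · intro c1 c2
    induction c1 using Quot.ind with
    | _ d =>
      induction c2 using Quot.ind with
      | _ d' =>
        intro h
        have hEq : Relation.EqvGen (GDStrEquiv A circ brk) (Fm d) (Fm d') := Quot.eq.1 h
        exact Quot.sound (hinj d d' ((hequivR.eqvGen_iff).1 hEq))
  · intro c
    induction c using Quot.ind with
    | _ s =>
      obtain ⟨d, hd⟩ := hsurj s
      exact ⟨Quot.mk _ d, Quot.sound hd⟩





end GDExt
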